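/- Let r ≥ 1, δ ≥ 2, e ≥ 1, a ≥ 1 be integers with a ≤ (r−1)(δ−1) + 1 and e ≤ C(r+δ−1, r) − a. Let G be an r-uniform hypergraph with e edges. Then δ·|∂_{r−1}(G)| − r·e ≥ a. -/

import Mathlib

open Finset Finset.Colex

variable {n : ℕ}

lemma initSeg_subset_below (s : Finset (Fin n)) (c : Fin n) (h : ∀ b ∈ s, b < c) :
    initSeg s ⊆ powersetCard #s (Finset.Iio c) := by
  intro t ht
  rw [mem_initSeg] at ht
  rw [mem_powersetCard]
  refine ⟨fun x hx => mem_Iio.2 (Colex.forall_lt_mono ht.2 h x hx), ht.1.symm⟩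

lemma initSeg_card_le (s : Finset (Fin n)) (c : Fin n) (h : ∀ b ∈ s, b < c) :
    #(initSeg s) ≤ (c : ℕ).choose #s := by
  calc #(initSeg s) ≤ #(powersetCard #s (Finset.Iio c)) :=
        card_le_card (initSeg_subset_below s c h)
    _ = (c : ℕ).choose #s := by rw [card_powersetCard, Fin.card_Iio]

lemma initSeg_decomp (s : Finset (Fin n)) (hs : s.Nonempty) :
    initSeg s =
      powersetCard #s (Finset.Iio (s.max' hs)) ∪
        (initSeg (s.erase (s.max' hs))).image (insert (s.max' hs)) := by
  set M := s.max' hs with hM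
  have hMs : M ∈ s := s.max'_mem hs
  have hbelow : ∀ b ∈ s.erase M, b < M := fun b hb =>
    lt_of_le_of_ne (s.le_max' b (mem_of_mem_erase hb)) (ne_of_mem_erase hb)
  ext t
  simp only [mem_union, mem_initSeg, mem_powersetCard, mem_image]
  constructor
  · rintro ⟨hcard, hle⟩
    by_cases hMt : M ∈ t
    · right
      refine ⟨t.erase M, ⟨?_, ?_⟩, insert_erase hMt⟩
      · rw [card_erase_of_mem hMs, card_erase_of_mem hMt, hcard]
      · rw [← sdiff_singleton_eq_erase, ← sdiff_singleton_eq_erase]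
        exact (toColex_sdiff_le_toColex_sdiff (by simpa using hMt) (by simpa using hMs)).2 hle
    · left
      refine ⟨fun x hx => mem_Iio.2 ?_, hcard.symm⟩
      have hxM : x ≤ M := by
        by_cases hxs : x ∈ s
        · exact s.le_max' x hxs
        · obtain ⟨b, hb, -, hxb⟩ := toColex_le_toColex.1 hle hx hxs
          exact hxb.trans (s.le_max' b hb)
      exact lt_of_le_of_ne hxM (fun h => hMt (h ▸ hx))
  · rintro (⟨hsub, hcard⟩ | ⟨u, ⟨hucard, hule⟩, rfl⟩)
    · refine ⟨hcard.symm, le_of_lt ?_⟩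
      rw [toColex_lt_toColex_iff_exists_forall_lt]
      exact ⟨M, hMs, fun h => absurd (mem_Iio.1 (hsub h)) (lt_irrefl M),
        fun b hb _ => mem_Iio.1 (hsub hb)⟩
    · have huM : M ∉ u := fun h => lt_irrefl M (Colex.forall_lt_mono hule hbelow M h)
      constructor
      · rw [card_insert_of_notMem huM, ← hucard, card_erase_of_mem hMs,
          Nat.sub_add_cancel (card_pos.2 hs)]
      · have : toColex ((insert M u) \ {M}) ≤ toColex (s \ {M}) := by
          rw [sdiff_singleton_eq_erase, sdiff_singleton_eq_erase, erase_insert huM]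
          exact hule
        exact (toColex_sdiff_le_toColex_sdiff (by simp) (by simpa using hMs)).1 this

lemma initSeg_card_decomp (s : Finset (Fin n)) (hs : s.Nonempty) :
    #(initSeg s) = ((s.max' hs : ℕ)).choose #s + #(initSeg (s.erase (s.max' hs))) := by
  set M := s.max' hs with hM
  have hMs : M ∈ s := s.max'_mem hs
  have hbelow : ∀ b ∈ s.erase M, b < M := fun b hb =>
    lt_of_le_of_ne (s.le_max' b (mem_of_mem_erase hb)) (ne_of_mem_erase hb)
  rw [initSeg_decomp s hs, card_union_of_disjoint, card_powersetCard, Fin.card_Iio,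
    card_image_of_injOn]
  · intro u hu v hv huv
    have huM : M ∉ u := fun h => lt_irrefl M
      (Colex.forall_lt_mono (mem_initSeg.1 hu).2 hbelow M h)
    have hvM : M ∉ v := fun h => lt_irrefl M
      (Colex.forall_lt_mono (mem_initSeg.1 hv).2 hbelow M h)
    rw [← erase_insert huM, ← erase_insert hvM, huv]
  · rw [disjoint_left]
    rintro t ht ht'
    rw [mem_powersetCard] at ht
    obtain ⟨u, hu, rfl⟩ := mem_image.1 ht'
    exact absurd (mem_Iio.1 (ht.1 (mem_insert_self M u))) (lt_irrefl M)


lemma card_filter_val_lt (k e : ℕ) (heB : e ≤ k) :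
    #((univ : Finset (Fin k)).filter (fun i => i.val < e)) = e := by
  have h : (univ : Finset (Fin k)).filter (fun i => i.val < e) =
      (univ : Finset (Fin e)).map (Fin.castLEEmb heB) := by
    ext i
    simp only [mem_filter, mem_univ, true_and, mem_map]
    constructor
    · intro hi
      exact ⟨⟨i, hi⟩, rfl⟩
    · rintro ⟨j, -, rfl⟩
      exact j.2
  rw [h, card_map, card_univ, Fintype.card_fin]

lemma exists_filter_le_card' {β : Type*} [LinearOrder β] (B : Finset β) (e : ℕ)
    (he : 1 ≤ e) (heB : e ≤ #B) : ∃ b ∈ B, #(B.filter (· ≤ b)) = e := by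
  have hlt : e - 1 < #B := by omega
  set σ := B.orderIsoOfFin rfl with hσ
  set b : β := (σ ⟨e - 1, hlt⟩ : β) with hb
  have hval : ((⟨e - 1, hlt⟩ : Fin #B) : ℕ) = e - 1 := rfl
  refine ⟨b, (σ ⟨e - 1, hlt⟩).2, ?_⟩
  have key : B.filter (· ≤ b) =
      ((univ : Finset (Fin #B)).filter (fun i => i.val < e)).image (fun i => (σ i : β)) := by
    ext x
    simp only [mem_filter, mem_image, mem_univ, true_and]
    constructor
    · rintro ⟨hxB, hxb⟩
      refine ⟨σ.symm ⟨x, hxB⟩, ?_, by simp⟩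
      have h1 : σ (σ.symm ⟨x, hxB⟩) ≤ σ ⟨e - 1, hlt⟩ := by
        rw [OrderIso.apply_symm_apply]
        exact Subtype.coe_le_coe.2 hxb
      have h3 := Fin.le_iff_val_le_val.1 (σ.le_iff_le.1 h1)
      rw [hval] at h3
      omega
    · rintro ⟨i, hi, rfl⟩
      refine ⟨(σ i).2, Subtype.coe_le_coe.2 (σ.le_iff_le.2 ?_)⟩
      refine Fin.le_iff_val_le_val.2 ?_
      rw [hval]
      omega
  rw [key, card_image_of_injOn (fun i _ j _ hij => σ.injective (Subtype.coe_injective hij)),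
    card_filter_val_lt _ _ heB]


lemma exists_filter_le_card {β : Type*} [LinearOrder β] (B : Finset β) (e : ℕ)
    (he : 1 ≤ e) (heB : e ≤ #B) :
    ∃ b ∈ B, ∃ F : Finset β, #F = e ∧ ∀ x, x ∈ F ↔ x ∈ B ∧ x ≤ b := by
  obtain ⟨b, hbB, hcard⟩ := exists_filter_le_card' B e he heB
  exact ⟨b, hbB, B.filter (· ≤ b), hcard, fun x => mem_filter⟩

lemma card_filter_eq_of_iff {β : Type*} (B : Finset β) (p q : β → Prop)
    [DecidablePred p] [DecidablePred q] (h : ∀ x, p x ↔ q x) :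
    #(B.filter p) = #(B.filter q) := by
  rw [filter_congr (fun x _ => h x)]
set_option maxHeartbeats 800000 in
lemma exists_initSeg_of_card (n r e : ℕ) (he : 1 ≤ e) (hen : e ≤ n.choose r) :
    ∃ s : Finset (Fin n), #s = r ∧ #(initSeg s) = e := by

  set B : Finset (Colex (Finset (Fin n))) :=
    (powersetCard r (univ : Finset (Fin n))).image toColex with hB
  have hBcard : #B = n.choose r := by
    rw [hB, card_image_of_injective _ toColex.injective, card_powersetCard, card_univ,
      Fintype.card_fin]
  obtain ⟨b, hbB, F, hFcard, hFmem⟩ := exists_filter_le_card B e he (by rw [hBcard]; exact hen)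
  rw [hB] at hbB
  obtain ⟨s, hs, rfl⟩ := mem_image.1 hbB
  rw [mem_powersetCard] at hs
  refine ⟨s, hs.2, ?_⟩
  have key : initSeg s = F.image ofColex := by
    ext t
    constructor
    · intro ht
      obtain ⟨hcard, hle⟩ := mem_initSeg.1 ht
      refine mem_image.2 ⟨toColex t, (hFmem _).2 ⟨?_, hle⟩, rfl⟩
      rw [hB]
      exact mem_image.2 ⟨t, mem_powersetCard.2 ⟨subset_univ t, hs.2 ▸ hcard.symm⟩, rfl⟩
    · intro ht
      obtain ⟨c, hc, rfl⟩ := mem_image.1 ht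
      obtain ⟨hcB, hcle⟩ := (hFmem _).1 hc
      rw [hB] at hcB
      obtain ⟨u, hu, rfl⟩ := mem_image.1 hcB
      rw [mem_powersetCard] at hu
      exact mem_initSeg.2 ⟨by rw [hs.2, ofColex_toColex, hu.2], hcle⟩
  rw [key, card_image_of_injective _ ofColex.injective]
  exact hFcard


lemma choose_ge_mul (x y : ℕ) : x * y + 1 ≤ (x + y).choose x := by
  induction y with
  | zero => simp
  | succ y ih =>
    match x with
    | 0 => simp
    | k + 1 =>
      have h1 : (k + 1 + (y + 1)).choose (k + 1) =
          (k + 1 + y).choose k + (k + 1 + y).choose (k + 1) := by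
        rw [show k + 1 + (y + 1) = (k + 1 + y) + 1 by omega]
        exact Nat.choose_succ_succ _ _
      have h2 : (k + 1 : ℕ) ≤ (k + 1 + y).choose k := by
        calc (k + 1 : ℕ) = (k + 1).choose k := (Nat.choose_succ_self_right k).symm
          _ ≤ (k + 1 + y).choose k := Nat.choose_le_choose k (by omega)
      have h5 : (k + 1) * (y + 1) = (k + 1) * y + (k + 1) := by ring
      omega

lemma core_arith (r δ Mv e₁ a a₁ t₁ : ℕ)
    (hδ : 2 ≤ δ)
    (hM1 : r + 1 ≤ Mv) (hM2 : Mv ≤ r + δ)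
    (he₁C : e₁ ≤ Mv.choose (r + 1)) (he₁ : 1 ≤ e₁)
    (hcon : Mv.choose (r + 2) + e₁ + a ≤ (r + δ + 1).choose (r + 2))
    (ha : 1 ≤ a) (haK : a ≤ (r + 1) * (δ - 1) + 1)
    (ha₁ : a₁ = min (r * (δ - 1) + 1) ((r + δ).choose (r + 1) - e₁))
    (hIH : (a₁ : ℤ) ≤ δ * t₁ - (r + 1) * e₁) :
    (a : ℤ) ≤ δ * ((Mv.choose (r + 1) : ℤ) + t₁) - (r + 2) * ((Mv.choose (r + 2) : ℤ) + e₁) := by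
  have hδ1 : 1 ≤ δ := by omega
  have pascal : (r + δ + 1).choose (r + 2) = (r + δ).choose (r + 1) + (r + δ).choose (r + 2) := by
    rw [show r + δ + 1 = (r + δ) + 1 by omega]
    exact Nat.choose_succ_succ _ _
  have hL : (r + 1) * (δ - 1) + 1 ≤ (r + δ).choose (r + 1) := by
    have := choose_ge_mul (r + 1) (δ - 1)
    rwa [show r + 1 + (δ - 1) = r + δ by omega] at this
  have idCnat : Mv.choose (r + 2) * (r + 2) = Mv.choose (r + 1) * (Mv - (r + 1)) :=
    Nat.choose_succ_right_eq Mv (r + 1)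
  have idC : (Mv.choose (r + 2) : ℤ) * ((r : ℤ) + 2) =
      (Mv.choose (r + 1) : ℤ) * ((Mv : ℤ) - ((r : ℤ) + 1)) := by
    zify [hM1] at idCnat
    convert idCnat using 2 <;> push_cast <;> ring
  have hC1L : Mv.choose (r + 1) ≤ (r + δ).choose (r + 1) := Nat.choose_le_choose _ hM2
  have he₁L : e₁ < (r + δ).choose (r + 1) := by
    rcases eq_or_lt_of_le hM2 with hMe | hMlt
    · rw [hMe] at hcon
      omega
    · have h1 : (Mv + 1).choose (r + 1) = Mv.choose r + Mv.choose (r + 1) :=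
        Nat.choose_succ_succ Mv r
      have hpos : 0 < Mv.choose r := Nat.choose_pos (by omega)
      have h2 : (Mv + 1).choose (r + 1) ≤ (r + δ).choose (r + 1) :=
        Nat.choose_le_choose _ (by omega)
      omega
  -- cast versions
  have haKz : (a : ℤ) ≤ ((r : ℤ) + 1) * ((δ : ℤ) - 1) + 1 := by
    zify [hδ1] at haK
    convert haK using 2 <;> push_cast <;> ring
  have hLz : ((r : ℤ) + 1) * ((δ : ℤ) - 1) + 1 ≤ ((r + δ).choose (r + 1) : ℤ) := by
    zify [hδ1] at hL
    convert hL using 2 <;> push_cast <;> ring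
  have he₁Cz : (e₁ : ℤ) ≤ (Mv.choose (r + 1) : ℤ) := by exact_mod_cast he₁C
  have he₁Lz : (e₁ : ℤ) < ((r + δ).choose (r + 1) : ℤ) := by exact_mod_cast he₁L
  rcases eq_or_lt_of_le hM2 with hMe | hMlt
  · -- Mv = r + δ
    have hE : e₁ + a ≤ Mv.choose (r + 1) := by
      rw [hMe] at hcon ⊢
      omega
    have hEz : (e₁ : ℤ) + (a : ℤ) ≤ (Mv.choose (r + 1) : ℤ) := by exact_mod_cast hE
    have hD : (Mv : ℤ) - ((r : ℤ) + 1) = (δ : ℤ) - 1 := by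
      rw [hMe]
      push_cast
      ring
    rw [hD] at idC
    have ha₁' : (0 : ℤ) ≤ (a₁ : ℤ) := Int.natCast_nonneg _
    nlinarith [hIH, idC, ha₁', hEz]
  · -- Mv < r + δ, so Mv - (r+1) ≤ δ - 2
    have hd0 : (0 : ℤ) ≤ (Mv : ℤ) - ((r : ℤ) + 1) := by
      have := (Nat.cast_le (α := ℤ)).2 hM1
      push_cast at this
      omega
    have hd2 : (Mv : ℤ) - ((r : ℤ) + 1) ≤ (δ : ℤ) - 2 := by
      have := (Nat.cast_lt (α := ℤ)).2 hMlt
      push_cast at this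
      omega
    have hC1D : (Mv : ℤ) - ((r : ℤ) + 1) + 1 ≤ (Mv.choose (r + 1) : ℤ) := by
      have h1 : Mv.choose (Mv - (r + 1)) = Mv.choose (r + 1) := Nat.choose_symm hM1
      have h2 : (Mv - (r + 1)) + 1 ≤ Mv.choose (Mv - (r + 1)) := by
        calc (Mv - (r + 1)) + 1 = (Mv - (r + 1) + 1).choose (Mv - (r + 1)) :=
              (Nat.choose_succ_self_right _).symm
          _ ≤ Mv.choose (Mv - (r + 1)) := Nat.choose_le_choose _ (by omega)
      have h3 : (Mv - (r + 1)) + 1 ≤ Mv.choose (r + 1) := by omega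
      zify [hM1] at h3
      convert h3 using 2
    have key : (a : ℤ) ≤ ((δ : ℤ) - ((Mv : ℤ) - ((r : ℤ) + 1))) * (Mv.choose (r + 1) : ℤ)
        + (a₁ : ℤ) - (e₁ : ℤ) := by
      rcases le_total (r * (δ - 1) + 1) ((r + δ).choose (r + 1) - e₁) with hmin | hmin
      · have ha₁v : a₁ = r * (δ - 1) + 1 := by omega
        have ha₁z : (a₁ : ℤ) = (r : ℤ) * ((δ : ℤ) - 1) + 1 := by
          rw [ha₁v]
          push_cast [Nat.cast_sub hδ1]
          ring
        have h1 : ((δ : ℤ) - 1 - ((Mv : ℤ) - ((r : ℤ) + 1))) * (((Mv : ℤ) - ((r : ℤ) + 1)) + 1) ≤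
            ((δ : ℤ) - 1 - ((Mv : ℤ) - ((r : ℤ) + 1))) * (Mv.choose (r + 1) : ℤ) :=
          mul_le_mul_of_nonneg_left hC1D (by omega)
        have h3 : ((δ : ℤ) - 1 - ((Mv : ℤ) - ((r : ℤ) + 1))) * (((Mv : ℤ) - ((r : ℤ) + 1)) + 1) =
            ((δ : ℤ) - 1) + ((Mv : ℤ) - ((r : ℤ) + 1)) * ((δ : ℤ) - 2 - ((Mv : ℤ) - ((r : ℤ) + 1))) := by
          ring
        have h2 : (0 : ℤ) ≤ ((Mv : ℤ) - ((r : ℤ) + 1)) * ((δ : ℤ) - 2 - ((Mv : ℤ) - ((r : ℤ) + 1))) :=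
          mul_nonneg hd0 (by omega)
        have h4 : ((δ : ℤ) - ((Mv : ℤ) - ((r : ℤ) + 1))) * (Mv.choose (r + 1) : ℤ) =
            ((δ : ℤ) - 1 - ((Mv : ℤ) - ((r : ℤ) + 1))) * (Mv.choose (r + 1) : ℤ)
              + (Mv.choose (r + 1) : ℤ) := by ring
        rw [ha₁z]
        linarith
      · have ha₁v : a₁ = (r + δ).choose (r + 1) - e₁ := by omega
        have ha₁z : (a₁ : ℤ) = ((r + δ).choose (r + 1) : ℤ) - (e₁ : ℤ) := by
          rw [ha₁v]
          push_cast [Nat.cast_sub (le_of_lt he₁L)]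
          ring
        have h4 : 2 * (Mv.choose (r + 1) : ℤ) ≤
            ((δ : ℤ) - ((Mv : ℤ) - ((r : ℤ) + 1))) * (Mv.choose (r + 1) : ℤ) :=
          mul_le_mul_of_nonneg_right (by omega) (by positivity)
        rw [ha₁z]
        linarith
    have h5 : ((δ : ℤ) - ((Mv : ℤ) - ((r : ℤ) + 1))) * (Mv.choose (r + 1) : ℤ) =
        (δ : ℤ) * (Mv.choose (r + 1) : ℤ)
          - (Mv.choose (r + 1) : ℤ) * ((Mv : ℤ) - ((r : ℤ) + 1)) := by ring
    have h6 : (δ : ℤ) * ((Mv.choose (r + 1) : ℤ) + (t₁ : ℤ)) =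
        (δ : ℤ) * (Mv.choose (r + 1) : ℤ) + (δ : ℤ) * (t₁ : ℤ) := by ring
    have h7 : ((r : ℤ) + 2) * ((Mv.choose (r + 2) : ℤ) + (e₁ : ℤ)) =
        (Mv.choose (r + 2) : ℤ) * ((r : ℤ) + 2) + ((r : ℤ) + 2) * (e₁ : ℤ) := by ring
    have h8 : ((r : ℤ) + 1) * (e₁ : ℤ) + (e₁ : ℤ) = ((r : ℤ) + 2) * (e₁ : ℤ) := by ring
    linarith [hIH, key, idC, h5, h6, h7, h8]

lemma initSeg_empty_card (n : ℕ) : #(initSeg (∅ : Finset (Fin n))) = 1 := by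
  have h : initSeg (∅ : Finset (Fin n)) = {∅} := by
    ext t
    simp only [mem_initSeg, mem_singleton, card_empty]
    constructor
    · rintro ⟨hc, -⟩
      exact (card_eq_zero.1 hc.symm)
    · rintro rfl
      simp
  rw [h, card_singleton]

lemma core_lemma (n δ : ℕ) (hδ : 2 ≤ δ) :
    ∀ (r : ℕ) (s : Finset (Fin n)) (hs : s.Nonempty), s.card = r + 1 → ∀ a : ℕ, 1 ≤ a →
      a ≤ r * (δ - 1) + 1 → #(initSeg s) + a ≤ (r + δ).choose (r + 1) →
      (a : ℤ) ≤ (δ : ℤ) * #(initSeg (s.erase (s.min' hs))) - ((r : ℤ) + 1) * #(initSeg s) := by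
  intro r
  induction r with
  | zero =>
    intro s hs hcard a ha haK hcon
    have hemp : s.erase (s.min' hs) = ∅ := by
      rw [← card_eq_zero, card_erase_of_mem (min'_mem s hs), hcard]
    rw [hemp, initSeg_empty_card]
    have he1 : 1 ≤ #(initSeg s) := card_pos.2 initSeg_nonempty
    have ha1 : a = 1 := by omega
    have hcon' : #(initSeg s) + a ≤ δ := by
      rwa [Nat.zero_add, Nat.choose_one_right] at hcon
    have : (#(initSeg s) : ℤ) + (a : ℤ) ≤ (δ : ℤ) := by exact_mod_cast hcon'
    rw [ha1] at this ⊢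
    push_cast
    linarith
  | succ r ih =>
    intro s hs hcard a ha haK hcon
    set M := s.max' hs with hM
    set s₀ := s.erase M with hs₀
    have hMs : M ∈ s := s.max'_mem hs
    have hcard₀ : #s₀ = r + 1 := by
      rw [hs₀, card_erase_of_mem hMs, hcard]
      omega
    have hs₀ne : s₀.Nonempty := card_pos.1 (by omega)
    have hbelow : ∀ b ∈ s₀, b < M := fun b hb =>
      lt_of_le_of_ne (s.le_max' b (mem_of_mem_erase hb)) (ne_of_mem_erase hb)
    set e₁ := #(initSeg s₀) with he₁def
    set t₁ := #(initSeg (s₀.erase (s₀.min' hs₀ne))) with ht₁def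
    -- decomposition of e
    have hdec : #(initSeg s) = ((M : ℕ)).choose (r + 2) + e₁ := by
      have := initSeg_card_decomp s hs
      rwa [← hM, ← hs₀, hcard, ← he₁def] at this
    -- min and max facts
    have hlt : s.min' hs < M := by
      rw [hM]
      exact min'_lt_max'_of_card s (by omega)
    set s' := s.erase (s.min' hs) with hs'
    have hs'card : #s' = r + 1 := by
      rw [hs', card_erase_of_mem (min'_mem s hs), hcard]
      omega
    have hs'ne : s'.Nonempty := card_pos.1 (by omega)
    have hMs' : M ∈ s' := mem_erase.2 ⟨ne_of_gt hlt, hMs⟩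
    have hmax' : s'.max' hs'ne = M := by
      refine le_antisymm ?_ (le_max' _ _ hMs')
      rw [hM]
      exact max'_subset hs'ne (erase_subset _ _)
    have hmin₀ : s₀.min' hs₀ne = s.min' hs := by
      refine le_antisymm ?_ ?_
      · exact min'_le _ _ (mem_erase.2 ⟨ne_of_lt hlt, min'_mem s hs⟩)
      · exact min'_subset _ (erase_subset _ _) -- may need arg order fix
    have herase : s'.erase M = s₀.erase (s₀.min' hs₀ne) := by
      rw [hmin₀]
      show (s.erase (s.min' hs)).erase M = (s.erase M).erase (s.min' hs)
      exact erase_right_comm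
    -- decomposition of shadow
    have hdec' : #(initSeg s') = ((M : ℕ)).choose (r + 1) + t₁ := by
      have := initSeg_card_decomp s' hs'ne
      rw [hmax'] at this
      rwa [hs'card, herase, ← ht₁def] at this
    -- bounds
    have he₁C : e₁ ≤ ((M : ℕ)).choose (r + 1) := by
      have := initSeg_card_le s₀ M hbelow
      rwa [hcard₀, ← he₁def] at this
    have he₁pos : 1 ≤ e₁ := card_pos.2 initSeg_nonempty
    have hM1 : r + 1 ≤ (M : ℕ) := by
      have hsub : s ⊆ Finset.Iic M := fun x hx => mem_Iic.2 (s.le_max' x hx)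
      have := card_le_card hsub
      rw [hcard, Fin.card_Iic] at this
      omega
    have hM2 : (M : ℕ) ≤ r + δ := by
      by_contra hcontra
      push_neg at hcontra
      have h1 : (r + δ + 1).choose (r + 2) ≤ ((M : ℕ)).choose (r + 2) :=
        Nat.choose_le_choose _ (by omega)
      have hcon2 : #(initSeg s) + a ≤ (r + δ + 1).choose (r + 2) := by
        rwa [show r + 1 + δ = r + δ + 1 by omega] at hcon
      omega
    have hconA : ((M : ℕ)).choose (r + 2) + e₁ + a ≤ (r + δ + 1).choose (r + 2) := by
      rw [← hdec]
      rwa [show r + 1 + δ = r + δ + 1 by omega] at hcon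
    -- the e₁ < L fact
    have he₁L : e₁ < (r + δ).choose (r + 1) := by
      rcases eq_or_lt_of_le hM2 with hMe | hMlt
      · have pascal : (r + δ + 1).choose (r + 2) =
            (r + δ).choose (r + 1) + (r + δ).choose (r + 2) := by
          rw [show r + δ + 1 = (r + δ) + 1 by omega]
          exact Nat.choose_succ_succ _ _
        rw [hMe] at hconA
        omega
      · have h1 : ((M : ℕ) + 1).choose (r + 1) = ((M : ℕ)).choose r + ((M : ℕ)).choose (r + 1) :=
          Nat.choose_succ_succ _ _
        have hpos : 0 < ((M : ℕ)).choose r := Nat.choose_pos (by omega)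
        have h2 : ((M : ℕ) + 1).choose (r + 1) ≤ (r + δ).choose (r + 1) :=
          Nat.choose_le_choose _ (by omega)
        omega
    -- apply IH
    set a₁ := min (r * (δ - 1) + 1) ((r + δ).choose (r + 1) - e₁) with ha₁def
    have ha₁pos : 1 ≤ a₁ := by omega
    have ha₁K : a₁ ≤ r * (δ - 1) + 1 := min_le_left _ _
    have ha₁con : e₁ + a₁ ≤ (r + δ).choose (r + 1) := by omega
    have hIH := ih s₀ hs₀ne hcard₀ a₁ ha₁pos ha₁K (by rw [← he₁def]; omega)
    rw [← ht₁def, ← he₁def] at hIH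
    -- apply arithmetic lemma
    have harith := core_arith r δ (M : ℕ) e₁ a a₁ t₁ hδ hM1 hM2 he₁C he₁pos hconA ha
      haK ha₁def hIH
    rw [hdec, hdec']
    push_cast
    push_cast at harith
    linarith

lemma erase_inst {α : Type*} (i1 i2 : DecidableEq α) (s : Finset α) (x : α) :
    @Finset.erase α i1 s x = @Finset.erase α i2 s x := by
  have h : i1 = i2 := by
    funext a b
    exact Subsingleton.elim _ _
  rw [h]

lemma shadow_card_inst {α : Type*} (i1 i2 : DecidableEq α) (G : Finset (Finset α)) :
    #(@Finset.shadow α i1 G) = #(@Finset.shadow α i2 G) := by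
  have h : i1 = i2 := by
    funext x y
    exact Subsingleton.elim _ _
  rw [h]

theorem thmFin (n r δ e a : ℕ) (hr : 1 ≤ r) (hδ : 2 ≤ δ) (he : 1 ≤ e) (ha : 1 ≤ a)
    (haineq : a ≤ (r - 1) * (δ - 1) + 1)
    (heineq : e + a ≤ (r + δ - 1).choose r)
    (G : Finset (Finset (Fin n)))
    (hunif : ∀ d ∈ G, d.card = r)
    (hcard : G.card = e) :
    (a : ℤ) ≤ (δ : ℤ) * #(Finset.shadow G) - (r : ℤ) * e := by
  have hen : e ≤ n.choose r := by
    have hsub : G ⊆ powersetCard r (univ : Finset (Fin n)) := fun d hd =>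
      mem_powersetCard.2 ⟨subset_univ d, hunif d hd⟩
    have := card_le_card hsub
    rwa [card_powersetCard, card_univ, Fintype.card_fin, hcard] at this
  obtain ⟨s, hsr, hse⟩ := exists_initSeg_of_card n r e he hen
  have hs : s.Nonempty := card_pos.1 (by omega)
  have hsized : (G : Set (Finset (Fin n))).Sized r := fun d hd => hunif d hd
  have hKK := Finset.kruskal_katona (𝒜 := G) (𝒞 := initSeg s) hsized
    (by rw [hse, hcard]) (by rw [← hsr]; exact Colex.isInitSeg_initSeg)
  -- bridge to our instances
  have hKK' : #(Finset.shadow (initSeg s)) ≤ #(Finset.shadow G) := by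
    refine le_trans (le_of_eq (shadow_card_inst _ _ _)) (le_trans hKK (le_of_eq (shadow_card_inst _ _ _)))
  have hsh : #(Finset.shadow (initSeg s)) = #(initSeg (s.erase (s.min' hs))) := by
    exact (shadow_card_inst _ _ _).trans (congrArg Finset.card
      ((Colex.shadow_initSeg hs).trans (congrArg initSeg (erase_inst _ _ s _))))
  obtain ⟨r', rfl⟩ : ∃ r', r = r' + 1 := ⟨r - 1, by omega⟩
  have hcore := core_lemma n δ hδ r' s hs hsr a ha
    (by rwa [show r' + 1 - 1 = r' by omega] at haineq)
    (by rw [hse]; rwa [show r' + 1 + δ - 1 = r' + δ by omega] at heineq)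
  rw [hse] at hcore
  rw [hsh] at hKK'
  have hcast : (#(initSeg (s.erase (s.min' hs))) : ℤ) ≤ (#(Finset.shadow G) : ℤ) := by
    exact_mod_cast hKK'
  have hδ0 : (0 : ℤ) ≤ (δ : ℤ) := Int.natCast_nonneg _
  push_cast at hcore ⊢
  nlinarith [hcore, hcast, hδ0]

/-- The `m`-shadow of a hypergraph: all `m`-element vertex subsets contained in some edge. -/
def hyperShadow {α : Type*} [DecidableEq α] (m : ℕ) (H : Finset (Finset α)) :
    Finset (Finset α) :=
  H.sup fun e => e.powersetCard m

lemma mem_hyperShadow {α : Type*} [DecidableEq α] {m : ℕ} {H : Finset (Finset α)}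
    {t : Finset α} : t ∈ hyperShadow m H ↔ ∃ d ∈ H, t ⊆ d ∧ #t = m := by
  simp only [hyperShadow, mem_sup, mem_powersetCard]

lemma hyperShadow_eq_shadow {α : Type*} [DecidableEq α] (r : ℕ) (hr : 1 ≤ r)
    (G : Finset (Finset α)) (hunif : ∀ d ∈ G, #d = r) :
    hyperShadow (r - 1) G = Finset.shadow G := by
  ext t
  rw [mem_hyperShadow, mem_shadow_iff]
  constructor
  · rintro ⟨d, hd, hsub, hcardt⟩
    have hcd : #d = r := hunif d hd
    have hne : ¬ d ⊆ t := fun h => by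
      have := card_le_card h
      omega
    obtain ⟨x, hxd, hxt⟩ := not_subset.1 hne
    refine ⟨d, hd, x, hxd, ?_⟩
    refine (eq_of_subset_of_card_le (fun y hy => mem_erase.2 ⟨fun h => hxt (by subst h; exact hy), hsub hy⟩) ?_).symm
    rw [card_erase_of_mem hxd, hcd, hcardt]
  · rintro ⟨d, hd, x, hxd, rfl⟩
    refine ⟨d, hd, erase_subset _ _, ?_⟩
    rw [card_erase_of_mem hxd, hunif d hd]

lemma image_eq_of_image_eq {α β : Type*} [DecidableEq β] {f : α → β} {V : Finset α}
    (hf : Set.InjOn f V) {d₁ d₂ : Finset α} (h1 : d₁ ⊆ V) (h2 : d₂ ⊆ V)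
    (h : d₁.image f = d₂.image f) : d₁ = d₂ := by
  ext x
  constructor
  · intro hx
    have : f x ∈ d₂.image f := h ▸ mem_image_of_mem f hx
    obtain ⟨y, hy, hyx⟩ := mem_image.1 this
    rwa [← hf (h2 hy) (h1 hx) hyx]
  · intro hx
    have : f x ∈ d₁.image f := h.symm ▸ mem_image_of_mem f hx
    obtain ⟨y, hy, hyx⟩ := mem_image.1 this
    rwa [← hf (h1 hy) (h2 hx) hyx]

lemma hyperShadow_image {α β : Type*} [DecidableEq α] [DecidableEq β] (f : α → β)
    (V : Finset α) (hf : Set.InjOn f V) (G : Finset (Finset α)) (hG : ∀ d ∈ G, d ⊆ V)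
    (m : ℕ) :
    hyperShadow m (G.image fun d => d.image f) = (hyperShadow m G).image fun d => d.image f := by
  ext t
  rw [mem_hyperShadow]
  constructor
  · rintro ⟨d', hd', hsub, hcardt⟩
    obtain ⟨d, hd, rfl⟩ := mem_image.1 hd'
    set u := d.filter (fun x => f x ∈ t) with hu
    have huim : u.image f = t := by
      apply subset_antisymm
      · intro y hy
        obtain ⟨x, hx, rfl⟩ := mem_image.1 hy
        exact (mem_filter.1 hx).2
      · intro y hy
        obtain ⟨x, hx, rfl⟩ := mem_image.1 (hsub hy)
        exact mem_image_of_mem f (mem_filter.2 ⟨hx, hy⟩)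
    have hucard : #u = m := by
      rw [← hcardt, ← huim]
      exact (card_image_of_injOn (hf.mono (fun x hx => hG d hd (mem_of_mem_filter x hx)))).symm
    refine mem_image.2 ⟨u, mem_hyperShadow.2 ⟨d, hd, filter_subset _ _, hucard⟩, huim⟩
  · rintro ht
    obtain ⟨u, hu, rfl⟩ := mem_image.1 ht
    obtain ⟨d, hd, husub, hucard⟩ := mem_hyperShadow.1 hu
    refine ⟨d.image f, mem_image_of_mem _ hd, image_subset_image husub, ?_⟩
    rw [card_image_of_injOn (hf.mono (fun x hx => hG d hd (husub hx))), hucard]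

theorem f_r_delta_shadow_bound {α : Type*} [DecidableEq α]
    (r δ e a : ℕ) (hr : 1 ≤ r) (hδ : 2 ≤ δ) (he : 1 ≤ e) (ha : 1 ≤ a)
    (haineq : a ≤ (r - 1) * (δ - 1) + 1)
    (heineq : e ≤ (r + δ - 1).choose r - a)
    (G : Finset (Finset α))
    (hunif : ∀ d ∈ G, d.card = r)
    (hcard : G.card = e) :
    (a : ℤ) ≤ (δ : ℤ) * (hyperShadow (r - 1) G).card - (r : ℤ) * e := by
  classical
  have heA : e + a ≤ (r + δ - 1).choose r := by omega
  set V : Finset α := G.sup id with hV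
  have hGV : ∀ d ∈ G, d ⊆ V := fun d hd => le_sup (f := id) hd
  have hn : 0 < #V := by
    obtain ⟨d, hd⟩ := card_pos.1 (hcard ▸ he)
    obtain ⟨x, hx⟩ := card_pos.1 ((hunif d hd) ▸ hr)
    exact card_pos.2 ⟨x, hGV d hd hx⟩
  set n := #V with hn'
  set f : α → Fin n := fun x => if h : x ∈ V then (V.equivFin ⟨x, h⟩) else ⟨0, hn⟩ with hfdef
  have hf : Set.InjOn f V := by
    intro x hx y hy hxy
    rw [Finset.mem_coe] at hx hy
    rw [hfdef] at hxy
    simp only [dif_pos hx, dif_pos hy] at hxy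
    have h2 := V.equivFin.injective hxy
    exact congrArg Subtype.val h2
  set G' : Finset (Finset (Fin n)) := G.image (fun d => d.image f) with hG'
  have hunif' : ∀ d' ∈ G', #d' = r := by
    intro d' hd'
    obtain ⟨d, hd, rfl⟩ := mem_image.1 hd'
    rw [card_image_of_injOn (hf.mono (hGV d hd)), hunif d hd]
  have hcard' : #G' = e := by
    rw [hG', card_image_of_injOn, hcard]
    intro d₁ h1 d₂ h2 h
    rw [Finset.mem_coe] at h1 h2
    exact image_eq_of_image_eq hf (hGV _ h1) (hGV _ h2) h
  have hmain := thmFin n r δ e a hr hδ he ha haineq heA G' hunif' hcard'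
  have hsh1 : hyperShadow (r - 1) G' = (hyperShadow (r - 1) G).image (fun d => d.image f) := by
    rw [hG']
    exact hyperShadow_image f V hf G hGV (r - 1)
  have hsh2 : #((hyperShadow (r - 1) G).image (fun d => d.image f)) = #(hyperShadow (r - 1) G) := by
    apply card_image_of_injOn
    intro t₁ h1 t₂ h2 h
    rw [Finset.mem_coe, mem_hyperShadow] at h1 h2
    obtain ⟨d₁, hd₁, hsub₁, -⟩ := h1
    obtain ⟨d₂, hd₂, hsub₂, -⟩ := h2
    exact image_eq_of_image_eq hf (hsub₁.trans (hGV _ hd₁)) (hsub₂.trans (hGV _ hd₂)) h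
  have hsh3 : #(Finset.shadow G') = #(hyperShadow (r - 1) G) := by
    rw [← hyperShadow_eq_shadow r hr G' hunif', hsh1, hsh2]
  rw [hsh3] at hmain
  exact hmain
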